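/- The map g : ℝ₊ × ℝ × (-1,1) × ℝ → ℝ⁴, written in coordinates (r,θ) polar on the first ℝ²-factor and (x,y) Cartesian on the second, given by g(θ, z, p_θ, p_z) = (r, Θ, x, y) = (1 + p_θ, -θ/(1+p_θ), z, p_z), pulls back the symplectic form -r dr∧dΘ + dy∧dx to dp_θ∧dθ + dp_z∧dz. -/

import Mathlib

open Real

/-- The map `g(θ,z,p_θ,p_z) = (r,Θ,x,y) = (1+p_θ, -θ/(1+p_θ), z, p_z)`,
written in Cartesian coordinates on the target (polar `(r,Θ)` on the first `ℝ²`-factor),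
pulls back the symplectic form `-r dr∧dΘ + dy∧dx` (i.e. the standard form `dy∧dx`
on each Cartesian factor) to `dp_θ∧dθ + dp_z∧dz`. -/
theorem stmt10
    (G : ℝ × ℝ × ℝ × ℝ → ℝ × ℝ × ℝ × ℝ)
    (hG : ∀ p : ℝ × ℝ × ℝ × ℝ,
      G p = ((1 + p.2.2.1) * Real.cos (-p.1 / (1 + p.2.2.1)),
             (1 + p.2.2.1) * Real.sin (-p.1 / (1 + p.2.2.1)),
             p.2.1, p.2.2.2))
    (ωtgt : (ℝ × ℝ × ℝ × ℝ) → (ℝ × ℝ × ℝ × ℝ) → ℝ)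
    (hωtgt : ∀ u v, ωtgt u v = u.2.1 * v.1 - u.1 * v.2.1
      + u.2.2.2 * v.2.2.1 - u.2.2.1 * v.2.2.2)
    (ωsrc : (ℝ × ℝ × ℝ × ℝ) → (ℝ × ℝ × ℝ × ℝ) → ℝ)
    (hωsrc : ∀ u v, ωsrc u v = u.2.2.1 * v.1 - u.1 * v.2.2.1
      + u.2.2.2 * v.2.1 - u.2.1 * v.2.2.2)
    (p : ℝ × ℝ × ℝ × ℝ) (hp : -1 < p.2.2.1 ∧ p.2.2.1 < 1) :
    ∀ u v : ℝ × ℝ × ℝ × ℝ,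
      ωtgt (fderiv ℝ G p u) (fderiv ℝ G p v) = ωsrc u v := by
  have hGeq : G = fun q : ℝ × ℝ × ℝ × ℝ =>
      ((1 + q.2.2.1) * Real.cos (-q.1 / (1 + q.2.2.1)),
       (1 + q.2.2.1) * Real.sin (-q.1 / (1 + q.2.2.1)),
       q.2.1, q.2.2.2) := funext hG
  subst hGeq
  set a : ℝ := 1 + p.2.2.1 with ha_def
  have ha : a ≠ 0 := by dsimp [a]; linarith [hp.1]
  -- projections as continuous linear maps
  set π₁ : ℝ × ℝ × ℝ × ℝ →L[ℝ] ℝ := ContinuousLinearMap.fst ℝ ℝ (ℝ × ℝ × ℝ) with hπ₁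
  set π₂ : ℝ × ℝ × ℝ × ℝ →L[ℝ] ℝ :=
    (ContinuousLinearMap.fst ℝ ℝ (ℝ × ℝ)).comp (ContinuousLinearMap.snd ℝ ℝ (ℝ × ℝ × ℝ)) with hπ₂
  set π₃ : ℝ × ℝ × ℝ × ℝ →L[ℝ] ℝ :=
    ((ContinuousLinearMap.fst ℝ ℝ ℝ).comp (ContinuousLinearMap.snd ℝ ℝ (ℝ × ℝ))).comp
      (ContinuousLinearMap.snd ℝ ℝ (ℝ × ℝ × ℝ)) with hπ₃
  set π₄ : ℝ × ℝ × ℝ × ℝ →L[ℝ] ℝ :=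
    ((ContinuousLinearMap.snd ℝ ℝ ℝ).comp (ContinuousLinearMap.snd ℝ ℝ (ℝ × ℝ))).comp
      (ContinuousLinearMap.snd ℝ ℝ (ℝ × ℝ × ℝ)) with hπ₄
  have h1 : HasFDerivAt (fun q : ℝ × ℝ × ℝ × ℝ => q.1) π₁ p := hasFDerivAt_fst
  have h22 : HasFDerivAt (fun q : ℝ × ℝ × ℝ × ℝ => q.2.2)
      ((ContinuousLinearMap.snd ℝ ℝ (ℝ × ℝ)).comp (ContinuousLinearMap.snd ℝ ℝ (ℝ × ℝ × ℝ))) p :=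
    hasFDerivAt_snd.comp p hasFDerivAt_snd
  have h2 : HasFDerivAt (fun q : ℝ × ℝ × ℝ × ℝ => q.2.1) π₂ p :=
    hasFDerivAt_fst.comp p hasFDerivAt_snd
  have h3 : HasFDerivAt (fun q : ℝ × ℝ × ℝ × ℝ => q.2.2.1) π₃ p := by
    rw [hπ₃, ContinuousLinearMap.comp_assoc]
    exact hasFDerivAt_fst.comp p h22
  have h4 : HasFDerivAt (fun q : ℝ × ℝ × ℝ × ℝ => q.2.2.2) π₄ p := by
    rw [hπ₄, ContinuousLinearMap.comp_assoc]
    exact hasFDerivAt_snd.comp p h22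
  have hA : HasFDerivAt (fun q : ℝ × ℝ × ℝ × ℝ => 1 + q.2.2.1) π₃ p := by
    simpa using h3.const_add 1
  set φ : ℝ × ℝ × ℝ × ℝ → ℝ := fun q => -q.1 / (1 + q.2.2.1) with hφ_def
  have hr : HasFDerivAt (fun q : ℝ × ℝ × ℝ × ℝ => (1 + q.2.2.1)⁻¹) ((-(a ^ 2)⁻¹) • π₃) p :=
    (hasDerivAt_inv ha).comp_hasFDerivAt p hA
  set Dφ : ℝ × ℝ × ℝ × ℝ →L[ℝ] ℝ := (-p.1) • ((-(a ^ 2)⁻¹) • π₃) + a⁻¹ • (-π₁) with hDφ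
  have hφ : HasFDerivAt φ Dφ p := by
    have h := (h1.neg).mul hr
    have e1 : φ = fun q : ℝ × ℝ × ℝ × ℝ => -q.1 * (1 + q.2.2.1)⁻¹ := by
      funext q; simp [hφ_def, div_eq_mul_inv]
    rw [e1]
    convert h using 1
    all_goals rfl
  set C : ℝ := Real.cos (φ p) with hC
  set S : ℝ := Real.sin (φ p) with hS
  have hcos : HasFDerivAt (fun q => Real.cos (φ q)) ((-S) • Dφ) p :=
    (Real.hasDerivAt_cos (φ p)).comp_hasFDerivAt p hφ
  have hsin : HasFDerivAt (fun q => Real.sin (φ q)) (C • Dφ) p :=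
    (Real.hasDerivAt_sin (φ p)).comp_hasFDerivAt p hφ
  have hf1 : HasFDerivAt (fun q : ℝ × ℝ × ℝ × ℝ => (1 + q.2.2.1) * Real.cos (φ q))
      (a • ((-S) • Dφ) + C • π₃) p := hA.mul hcos
  have hf2 : HasFDerivAt (fun q : ℝ × ℝ × ℝ × ℝ => (1 + q.2.2.1) * Real.sin (φ q))
      (a • (C • Dφ) + S • π₃) p := hA.mul hsin
  set L : ℝ × ℝ × ℝ × ℝ →L[ℝ] ℝ × ℝ × ℝ × ℝ :=
    (a • ((-S) • Dφ) + C • π₃).prod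
      ((a • (C • Dφ) + S • π₃).prod (π₂.prod π₄)) with hL
  have hGd : HasFDerivAt (fun q : ℝ × ℝ × ℝ × ℝ =>
      ((1 + q.2.2.1) * Real.cos (-q.1 / (1 + q.2.2.1)),
       (1 + q.2.2.1) * Real.sin (-q.1 / (1 + q.2.2.1)),
       q.2.1, q.2.2.2)) L p :=
    hf1.prodMk (hf2.prodMk (h2.prodMk h4))
  rw [hGd.fderiv]
  intro u v
  set c : ℝ := p.1 / a with hc_def
  have hLu : ∀ w : ℝ × ℝ × ℝ × ℝ, L w =
      (w.2.2.1 * C + S * (w.1 - c * w.2.2.1),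
       w.2.2.1 * S - C * (w.1 - c * w.2.2.1),
       w.2.1, w.2.2.2) := by
    intro w
    simp [hL, hDφ, hπ₁, hπ₂, hπ₃, hπ₄, smul_eq_mul, hc_def]
    constructor <;> field_simp <;> ring
  rw [hωtgt, hωsrc, hLu u, hLu v]
  have hsc : S ^ 2 + C ^ 2 = 1 := by rw [hS, hC]; exact sin_sq_add_cos_sq _
  simp only []
  linear_combination (u.2.2.1 * (v.1 - c * v.2.2.1) - (u.1 - c * u.2.2.1) * v.2.2.1) * hsc
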